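/- A finite lattice has nullity 0 if and only if it is a chain. -/

import Mathlib

/-- The cover graph of a poset: vertices are the elements, edges are covering pairs. -/
def coverGraph (α : Type*) [PartialOrder α] : SimpleGraph α where
  Adj x y := x ⋖ y ∨ y ⋖ x
  symm := ⟨fun _ _ h => h.symm⟩
  loopless := ⟨fun x h => by rcases h with h | h <;> exact h.lt.false⟩

/-- The nullity of a (finite) poset: `m - n + c` where `m` is the number of edges,
`n` the number of vertices and `c` the number of connected components of the cover graph. -/
noncomputable def nullity (α : Type*) [PartialOrder α] : ℤ :=
  (Nat.card (coverGraph α).edgeSet : ℤ) - (Nat.card α : ℤ)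
    + (Nat.card (coverGraph α).ConnectedComponent : ℤ)

section aux
variable {α : Type*} [PartialOrder α] [Fintype α]

/-- In a finite poset, below any `z > x` there is a lower cover of `z` above `x`. -/
lemma my_exists_le_covBy {x z : α} (h : x < z) : ∃ w, x ≤ w ∧ w ⋖ z := by
  obtain ⟨w, ⟨hxw, hwz⟩, hmax⟩ :=
    Set.Finite.exists_maximalFor id {w | x ≤ w ∧ w < z} (Set.toFinite _) ⟨x, le_rfl, h⟩
  refine ⟨w, hxw, hwz, fun u hwu huz => ?_⟩
  exact absurd (hmax (j := u) ⟨hxw.trans hwu.le, huz⟩ hwu.le) hwu.not_ge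
end aux

section lat
variable {α : Type*} [Lattice α] [Fintype α] [Nonempty α]

lemma my_preconnected : (coverGraph α).Preconnected := by
  letI : OrderBot α := Fintype.toOrderBot α
  have key : ∀ x : α, (coverGraph α).Reachable ⊥ x := by
    intro x
    induction x using WellFoundedLT.induction with
    | ind x IH =>
      rcases eq_or_ne x ⊥ with rfl | hx
      · exact SimpleGraph.Reachable.refl _
      · obtain ⟨w, -, hwx⟩ := my_exists_le_covBy (bot_lt_iff_ne_bot.2 hx)
        exact (IH w hwx.lt).trans (SimpleGraph.Adj.reachable (Or.inl hwx))
  exact fun a b => (key a).symm.trans (key b)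

end lat

/-- A finite lattice has nullity `0` if and only if it is a chain. -/
theorem stmt10 {α : Type*} [Lattice α] [Fintype α] [Nonempty α] :
    nullity α = 0 ↔ ∀ x y : α, x ≤ y ∨ y ≤ x := by
  classical
  letI : OrderBot α := Fintype.toOrderBot α
  -- one connected component
  have hsub : Subsingleton (coverGraph α).ConnectedComponent := by
    constructor
    intro a b
    refine SimpleGraph.ConnectedComponent.ind₂ (fun u v => ?_) a b
    exact SimpleGraph.ConnectedComponent.sound (my_preconnected u v)
  have hc : Nat.card (coverGraph α).ConnectedComponent = 1 :=
    Nat.card_eq_one_iff_unique.2 ⟨hsub, ⟨(coverGraph α).connectedComponentMk (Classical.arbitrary α)⟩⟩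
  -- the chosen lower cover map
  have hex : ∀ x : {x : α // x ≠ ⊥}, ∃ w, w ⋖ x.1 := fun x =>
    ((my_exists_le_covBy (bot_lt_iff_ne_bot.2 x.2)).imp fun w h => h.2)
  set f : {x : α // x ≠ ⊥} → α := fun x => (hex x).choose with hfdef
  have hf : ∀ x, f x ⋖ x.1 := fun x => (hex x).choose_spec
  set g : {x : α // x ≠ ⊥} → (coverGraph α).edgeSet :=
    fun x => ⟨s(f x, x.1), Or.inl (hf x)⟩ with hgdef
  have hg_inj : Function.Injective g := by
    intro x y hxy
    have h : s(f x, x.1) = s(f y, y.1) := congrArg Subtype.val hxy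
    rw [Sym2.eq_iff] at h
    rcases h with ⟨h1, h2⟩ | ⟨h1, h2⟩
    · exact Subtype.ext h2
    · exact absurd (h2 ▸ (hf y).lt) (fun hlt => (h1 ▸ (hf x).lt).asymm hlt)
  have hcardsub : Nat.card {x : α // x ≠ ⊥} = Nat.card α - 1 := by
    simp only [Nat.card_eq_fintype_card]
    have := Fintype.card_subtype_compl (fun x : α => x = ⊥)
    simp [Fintype.card_subtype_eq (⊥ : α)] at this; simp [this]
  have hn1 : 1 ≤ Nat.card α := Nat.card_pos
  constructor
  · -- nullity 0 → chain
    intro h0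
    have hm : Nat.card (coverGraph α).edgeSet = Nat.card α - 1 := by
      have hle : Nat.card {x : α // x ≠ ⊥} ≤ Nat.card (coverGraph α).edgeSet :=
        Nat.card_le_card_of_injective g hg_inj
      unfold nullity at h0
      rw [hc] at h0
      omega
    have hg_bij : Function.Bijective g :=
      (Nat.bijective_iff_injective_and_card g).2 ⟨hg_inj, by omega⟩
    -- all lower covers coincide with the chosen one
    have huniq : ∀ a b c : α, a ⋖ c → b ⋖ c → a = b := by
      have key : ∀ a c : α, (hac : a ⋖ c) → a = f ⟨c, ne_bot_of_gt hac.lt⟩ := by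
        intro a c hac
        obtain ⟨x, hx⟩ := hg_bij.2 ⟨s(a, c), Or.inl hac⟩
        have h : s(f x, x.1) = s(a, c) := congrArg Subtype.val hx
        rw [Sym2.eq_iff] at h
        rcases h with ⟨h1, h2⟩ | ⟨h1, h2⟩
        · exact h1.symm.trans (congrArg f (Subtype.ext h2))
        · exact absurd ((h1 ▸ hf x).lt) (h2 ▸ hac.lt).asymm
      intro a b c hac hbc
      rw [key a c hac, key b c hbc]
    intro x y
    by_contra hcon
    push_neg at hcon
    obtain ⟨hxy, hyx⟩ := hcon
    have hx : x < x ⊔ y := lt_of_le_of_ne le_sup_left (fun h => hyx (h ▸ le_sup_right))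
    have hy : y < x ⊔ y := lt_of_le_of_ne le_sup_right (fun h => hxy (h ▸ le_sup_left))
    obtain ⟨w₁, hxw₁, hw₁⟩ := my_exists_le_covBy hx
    obtain ⟨w₂, hyw₂, hw₂⟩ := my_exists_le_covBy hy
    have hww : w₁ = w₂ := huniq _ _ _ hw₁ hw₂
    exact absurd (sup_le hxw₁ (hww ▸ hyw₂)) hw₁.lt.not_ge
  · -- chain → nullity 0
    intro hchain
    have hg_surj : Function.Surjective g := by
      rintro ⟨e, he⟩
      induction e using Sym2.ind with
      | _ a b =>
        have key : ∀ a b : α, (hab : a ⋖ b) →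
            ∃ x, g x = ⟨s(a, b), Or.inl hab⟩ := by
          intro a b hab
          have hb : b ≠ ⊥ := ne_bot_of_gt hab.lt
          refine ⟨⟨b, hb⟩, ?_⟩
          have hfb := hf ⟨b, hb⟩
          have hfa : f ⟨b, hb⟩ = a := by
            rcases hchain (f ⟨b, hb⟩) a with h | h
            · rcases h.lt_or_eq with h' | h'
              · exact absurd hab.lt (hfb.2 h')
              · exact h'
            · rcases h.lt_or_eq with h' | h'
              · exact absurd hfb.lt (hab.2 h')
              · exact h'.symm
          exact Subtype.ext (by simp only [hgdef]; rw [hfa])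
        rcases he with hab | hba
        · exact key a b hab
        · obtain ⟨x, hx⟩ := key b a hba
          exact ⟨x, Subtype.ext (by rw [congrArg Subtype.val hx]; exact Sym2.eq_swap)⟩
    have hm : Nat.card (coverGraph α).edgeSet = Nat.card α - 1 := by
      rw [← hcardsub]
      exact (Nat.card_eq_of_bijective g ⟨hg_inj, hg_surj⟩).symm
    unfold nullity
    rw [hc, hm]
    push_cast [Nat.cast_sub hn1]
    ring
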